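/- Let ζ be the two-qubit state (1/4)(I⊗I + a·σ⊗I + I⊗b·σ + Σ_i c_i σ_i⊗σ_i). If Alice measures projectively along directions û_0 = x̂ and û_1 = ŷ and Bob measures along T_0 = x̂ and T_1 = ŷ, then the witness Q equals |(c_1 − a_1 b_1)(c_2 − a_2 b_2) − a_1 b_1 a_2 b_2| / ((1 − a_1²)(1 − a_2²)), assuming |a_1| < 1 and |a_2| < 1. -/
import Mathlib


open Matrix Kronecker

/-- The Pauli matrices σ₁ = σ_x, σ₂ = σ_y, σ₃ = σ_z. -/
noncomputable def pauli : Fin 3 → Matrix (Fin 2) (Fin 2) ℂ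
  | 0 => !![0, 1; 1, 0]
  | 1 => !![0, -Complex.I; Complex.I, 0]
  | 2 => !![1, 0; 0, -1]

/-- v·σ for a real vector v. -/
noncomputable def blochOp (v : Fin 3 → ℝ) : Matrix (Fin 2) (Fin 2) ℂ :=
  ∑ i, (v i : ℂ) • pauli i

/-- The canonical two-qubit state
    ζ = (1/4)(I⊗I + a·σ⊗I + I⊗b·σ + Σᵢ cᵢ σᵢ⊗σᵢ). -/
noncomputable def zeta (a b c : Fin 3 → ℝ) : Matrix (Fin 2 × Fin 2) (Fin 2 × Fin 2) ℂ :=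
  (1/4 : ℂ) • ((1 : Matrix (Fin 2) (Fin 2) ℂ) ⊗ₖ (1 : Matrix (Fin 2) (Fin 2) ℂ)
    + blochOp a ⊗ₖ (1 : Matrix (Fin 2) (Fin 2) ℂ)
    + (1 : Matrix (Fin 2) (Fin 2) ℂ) ⊗ₖ blochOp b
    + ∑ i, (c i : ℂ) • (pauli i ⊗ₖ pauli i))

/-- Alice's projective measurement operators M_{x1|x0} = (I + (−1)^{x1} û_{x0}·σ)/2. -/
noncomputable def measOp (u : Fin 2 → Fin 3 → ℝ) (x0 x1 : Fin 2) :
    Matrix (Fin 2) (Fin 2) ℂ :=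
  (1/2 : ℂ) • ((1 : Matrix (Fin 2) (Fin 2) ℂ) + ((-1 : ℂ) ^ (x1 : ℕ)) • blochOp (u x0))

/-- Conditional probability p(b|x1;x0,y) = Tr((M_{x1|x0}⊗M_{b|y})ζ)/Tr((M_{x1|x0}⊗I)ζ). -/
noncomputable def pcond (ρ : Matrix (Fin 2 × Fin 2) (Fin 2 × Fin 2) ℂ)
    (u T : Fin 2 → Fin 3 → ℝ) (b x1 x0 y : Fin 2) : ℝ :=
  (Matrix.trace ((measOp u x0 x1 ⊗ₖ measOp T y b) * ρ)).re /
    (Matrix.trace ((measOp u x0 x1 ⊗ₖ (1 : Matrix (Fin 2) (Fin 2) ℂ)) * ρ)).re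

/-- The witness Q = |det M| with M_{y,x0} = p(0|0;x0,y) − p(0|1;x0,y). -/
noncomputable def Qwitness (pc : Fin 2 → Fin 2 → Fin 2 → Fin 2 → ℝ) : ℝ :=
  |(pc 0 0 0 0 - pc 0 1 0 0) * (pc 0 0 1 1 - pc 0 1 1 1) -
    (pc 0 0 1 0 - pc 0 1 1 0) * (pc 0 0 0 1 - pc 0 1 0 1)|

/-- Measurement directions û_0 = x̂, û_1 = ŷ. -/
def dirXY : Fin 2 → Fin 3 → ℝ
  | 0 => ![1, 0, 0]
  | 1 => ![0, 1, 0]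

lemma trN000 (a b c : Fin 3 → ℝ) :
    (Matrix.trace ((measOp dirXY 0 0 ⊗ₖ measOp dirXY 0 0) * zeta a b c)).re
      = (1 + (a 0) + (b 0) + (c 0))/4 := by
  simp [measOp, zeta, blochOp, pauli, dirXY, Matrix.trace, Matrix.mul_apply,
    Matrix.kroneckerMap_apply, Fin.sum_univ_succ, Matrix.one_apply, Fintype.sum_prod_type,
    Complex.ext_iff, Prod.ext_iff]
  ring

lemma trN010 (a b c : Fin 3 → ℝ) :
    (Matrix.trace ((measOp dirXY 0 1 ⊗ₖ measOp dirXY 0 0) * zeta a b c)).re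
      = (1 + -(a 0) + (b 0) + -(c 0))/4 := by
  simp [measOp, zeta, blochOp, pauli, dirXY, Matrix.trace, Matrix.mul_apply,
    Matrix.kroneckerMap_apply, Fin.sum_univ_succ, Matrix.one_apply, Fintype.sum_prod_type,
    Complex.ext_iff, Prod.ext_iff]
  ring

lemma trN001 (a b c : Fin 3 → ℝ) :
    (Matrix.trace ((measOp dirXY 0 0 ⊗ₖ measOp dirXY 1 0) * zeta a b c)).re
      = (1 + (a 0) + (b 1) + (0))/4 := by
  simp [measOp, zeta, blochOp, pauli, dirXY, Matrix.trace, Matrix.mul_apply,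
    Matrix.kroneckerMap_apply, Fin.sum_univ_succ, Matrix.one_apply, Fintype.sum_prod_type,
    Complex.ext_iff, Prod.ext_iff]
  ring

lemma trN011 (a b c : Fin 3 → ℝ) :
    (Matrix.trace ((measOp dirXY 0 1 ⊗ₖ measOp dirXY 1 0) * zeta a b c)).re
      = (1 + -(a 0) + (b 1) + -(0))/4 := by
  simp [measOp, zeta, blochOp, pauli, dirXY, Matrix.trace, Matrix.mul_apply,
    Matrix.kroneckerMap_apply, Fin.sum_univ_succ, Matrix.one_apply, Fintype.sum_prod_type,
    Complex.ext_iff, Prod.ext_iff]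
  ring

lemma trN100 (a b c : Fin 3 → ℝ) :
    (Matrix.trace ((measOp dirXY 1 0 ⊗ₖ measOp dirXY 0 0) * zeta a b c)).re
      = (1 + (a 1) + (b 0) + (0))/4 := by
  simp [measOp, zeta, blochOp, pauli, dirXY, Matrix.trace, Matrix.mul_apply,
    Matrix.kroneckerMap_apply, Fin.sum_univ_succ, Matrix.one_apply, Fintype.sum_prod_type,
    Complex.ext_iff, Prod.ext_iff]
  ring

lemma trN110 (a b c : Fin 3 → ℝ) :
    (Matrix.trace ((measOp dirXY 1 1 ⊗ₖ measOp dirXY 0 0) * zeta a b c)).re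
      = (1 + -(a 1) + (b 0) + -(0))/4 := by
  simp [measOp, zeta, blochOp, pauli, dirXY, Matrix.trace, Matrix.mul_apply,
    Matrix.kroneckerMap_apply, Fin.sum_univ_succ, Matrix.one_apply, Fintype.sum_prod_type,
    Complex.ext_iff, Prod.ext_iff]
  ring

lemma trN101 (a b c : Fin 3 → ℝ) :
    (Matrix.trace ((measOp dirXY 1 0 ⊗ₖ measOp dirXY 1 0) * zeta a b c)).re
      = (1 + (a 1) + (b 1) + (c 1))/4 := by
  simp [measOp, zeta, blochOp, pauli, dirXY, Matrix.trace, Matrix.mul_apply,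
    Matrix.kroneckerMap_apply, Fin.sum_univ_succ, Matrix.one_apply, Fintype.sum_prod_type,
    Complex.ext_iff, Prod.ext_iff]
  ring

lemma trN111 (a b c : Fin 3 → ℝ) :
    (Matrix.trace ((measOp dirXY 1 1 ⊗ₖ measOp dirXY 1 0) * zeta a b c)).re
      = (1 + -(a 1) + (b 1) + -(c 1))/4 := by
  simp [measOp, zeta, blochOp, pauli, dirXY, Matrix.trace, Matrix.mul_apply,
    Matrix.kroneckerMap_apply, Fin.sum_univ_succ, Matrix.one_apply, Fintype.sum_prod_type,
    Complex.ext_iff, Prod.ext_iff]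
  ring

lemma trD00 (a b c : Fin 3 → ℝ) :
    (Matrix.trace ((measOp dirXY 0 0 ⊗ₖ (1 : Matrix (Fin 2) (Fin 2) ℂ)) * zeta a b c)).re
      = (1 + (a 0))/2 := by
  simp [measOp, zeta, blochOp, pauli, dirXY, Matrix.trace, Matrix.mul_apply,
    Matrix.kroneckerMap_apply, Fin.sum_univ_succ, Matrix.one_apply, Fintype.sum_prod_type,
    Complex.ext_iff, Prod.ext_iff]
  ring

lemma trD01 (a b c : Fin 3 → ℝ) :
    (Matrix.trace ((measOp dirXY 0 1 ⊗ₖ (1 : Matrix (Fin 2) (Fin 2) ℂ)) * zeta a b c)).re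
      = (1 + -(a 0))/2 := by
  simp [measOp, zeta, blochOp, pauli, dirXY, Matrix.trace, Matrix.mul_apply,
    Matrix.kroneckerMap_apply, Fin.sum_univ_succ, Matrix.one_apply, Fintype.sum_prod_type,
    Complex.ext_iff, Prod.ext_iff]
  ring

lemma trD10 (a b c : Fin 3 → ℝ) :
    (Matrix.trace ((measOp dirXY 1 0 ⊗ₖ (1 : Matrix (Fin 2) (Fin 2) ℂ)) * zeta a b c)).re
      = (1 + (a 1))/2 := by
  simp [measOp, zeta, blochOp, pauli, dirXY, Matrix.trace, Matrix.mul_apply,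
    Matrix.kroneckerMap_apply, Fin.sum_univ_succ, Matrix.one_apply, Fintype.sum_prod_type,
    Complex.ext_iff, Prod.ext_iff]
  ring

lemma trD11 (a b c : Fin 3 → ℝ) :
    (Matrix.trace ((measOp dirXY 1 1 ⊗ₖ (1 : Matrix (Fin 2) (Fin 2) ℂ)) * zeta a b c)).re
      = (1 + -(a 1))/2 := by
  simp [measOp, zeta, blochOp, pauli, dirXY, Matrix.trace, Matrix.mul_apply,
    Matrix.kroneckerMap_apply, Fin.sum_univ_succ, Matrix.one_apply, Fintype.sum_prod_type,
    Complex.ext_iff, Prod.ext_iff]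
  ring


theorem zeta_witness_formula (a b c : Fin 3 → ℝ)
    (ha1 : |a 0| < 1) (ha2 : |a 1| < 1) :
    Qwitness (pcond (zeta a b c) dirXY dirXY) =
      |(c 0 - a 0 * b 0) * (c 1 - a 1 * b 1) - a 0 * b 0 * a 1 * b 1| /
        ((1 - (a 0) ^ 2) * (1 - (a 1) ^ 2)) := by
  have d0p : (0:ℝ) < 1 + a 0 := by linarith [abs_lt.mp ha1 |>.1]
  have d0m : (0:ℝ) < 1 - a 0 := by linarith [abs_lt.mp ha1 |>.2]
  have d1p : (0:ℝ) < 1 + a 1 := by linarith [abs_lt.mp ha2 |>.1]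
  have d1m : (0:ℝ) < 1 - a 1 := by linarith [abs_lt.mp ha2 |>.2]
  have D0 : (0:ℝ) < 1 - (a 0)^2 := by nlinarith
  have D1 : (0:ℝ) < 1 - (a 1)^2 := by nlinarith
  simp only [Qwitness, pcond, trN000 a b c, trN010 a b c, trN001 a b c, trN011 a b c,
    trN100 a b c, trN110 a b c, trN101 a b c, trN111 a b c,
    trD00 a b c, trD01 a b c, trD10 a b c, trD11 a b c]
  rw [show ((1 + a 0 + b 0 + c 0)/4) / ((1 + a 0)/2) - ((1 + -(a 0) + b 0 + -(c 0))/4) / ((1 + -(a 0))/2)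
      = (c 0 - a 0 * b 0) / (1 - (a 0)^2) by rw [div_sub_div _ _ (by positivity) (by positivity : ((1 + -(a 0))/2) ≠ 0)]; rw [div_eq_div_iff (by positivity) (by positivity)]; ring,
    show ((1 + a 1 + b 1 + c 1)/4) / ((1 + a 1)/2) - ((1 + -(a 1) + b 1 + -(c 1))/4) / ((1 + -(a 1))/2)
      = (c 1 - a 1 * b 1) / (1 - (a 1)^2) by rw [div_sub_div _ _ (by positivity) (by positivity : ((1 + -(a 1))/2) ≠ 0)]; rw [div_eq_div_iff (by positivity) (by positivity)]; ring,
    show ((1 + a 1 + b 0 + 0)/4) / ((1 + a 1)/2) - ((1 + -(a 1) + b 0 + -0)/4) / ((1 + -(a 1))/2)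
      = (0 - a 1 * b 0) / (1 - (a 1)^2) by rw [div_sub_div _ _ (by positivity) (by positivity : ((1 + -(a 1))/2) ≠ 0)]; rw [div_eq_div_iff (by positivity) (by positivity)]; ring,
    show ((1 + a 0 + b 1 + 0)/4) / ((1 + a 0)/2) - ((1 + -(a 0) + b 1 + -0)/4) / ((1 + -(a 0))/2)
      = (0 - a 0 * b 1) / (1 - (a 0)^2) by rw [div_sub_div _ _ (by positivity) (by positivity : ((1 + -(a 0))/2) ≠ 0)]; rw [div_eq_div_iff (by positivity) (by positivity)]; ring]
  rw [show (c 0 - a 0*b 0)/(1-(a 0)^2) * ((c 1 - a 1*b 1)/(1-(a 1)^2))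
        - (0 - a 1*b 0)/(1-(a 1)^2) * ((0 - a 0*b 1)/(1-(a 0)^2))
      = ((c 0 - a 0*b 0)*(c 1 - a 1*b 1) - a 0*b 0*a 1*b 1)/((1-(a 0)^2)*(1-(a 1)^2)) by
    field_simp; ring]
  rw [abs_div, abs_of_pos (mul_pos D0 D1)]
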